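/- Validity of the 'packing a subset of items' reduction for strip packing: suppose items are sorted by non-increasing width with w₁ > W/2, let B = { i : wᵢ = w₁ } and S = { j : wⱼ ≤ W − w₁ }. If all items of S can be feasibly packed into the rectangle of width W − w₁ and height Σ_{i∈B} hᵢ, then there is an optimal strip packing solution in which the items of B are stacked left-aligned at the bottom of the strip (occupying [0, w₁] × [0, Σ_{i∈B} hᵢ]) and the items of S are packed in the adjacent rectangle [w₁, W] × [0, Σ_{i∈B} hᵢ]; moreover the optimal height of the full instance equals Σ_{i∈B} hᵢ plus the optimal strip-packing height of the remaining items I ∖ (B ∪ S). -/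

import Mathlib

open Finset

/-- Feasibility of packing the items of `J` into a strip of width `W` with height `k`. -/
def feasibleIn {ι : Type*} (J : Finset ι) (w h : ι → ℕ) (W k : ℕ) : Prop :=
  ∃ x y : ι → ℕ, (∀ i ∈ J, x i + w i ≤ W ∧ y i + h i ≤ k) ∧
    ∀ i ∈ J, ∀ j ∈ J, i ≠ j →
      x i + w i ≤ x j ∨ x j + w j ≤ x i ∨ y i + h i ≤ y j ∨ y j + h j ≤ y i

/-- Optimal strip packing height of the items of `J`. -/
noncomputable def stripOPT {ι : Type*} (J : Finset ι) (w h : ι → ℕ) (W : ℕ) : ℕ :=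
  sInf {k : ℕ | feasibleIn J w h W k}

section Aux

variable {ι : Type*} [DecidableEq ι]

/-- A vertical pile of the items of `J`. -/
lemma pile_exists [Fintype ι] (J : Finset ι) (h : ι → ℕ) :
    ∃ y : ι → ℕ, (∀ i ∈ J, y i + h i ≤ ∑ j ∈ J, h j) ∧
      ∀ i ∈ J, ∀ j ∈ J, i ≠ j → y i + h i ≤ y j ∨ y j + h j ≤ y i := by
  classical
  let e := Fintype.equivFin ι
  refine ⟨fun i => ∑ j ∈ J.filter (fun j => e j < e i), h j, ?_, ?_⟩
  · intro i hi
    have hnotmem : i ∉ J.filter (fun j => e j < e i) := by simp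
    have hsub : insert i (J.filter (fun j => e j < e i)) ⊆ J := by
      intro x hx
      rcases Finset.mem_insert.mp hx with rfl | hx
      · exact hi
      · exact (Finset.mem_filter.mp hx).1
    calc (∑ j ∈ J.filter (fun j => e j < e i), h j) + h i
        = ∑ j ∈ insert i (J.filter (fun j => e j < e i)), h j := by
          rw [Finset.sum_insert hnotmem]; ring
      _ ≤ ∑ j ∈ J, h j := Finset.sum_le_sum_of_subset hsub
  · intro i hi j hj hij
    have key : ∀ a b, a ∈ J → b ∈ J → e a < e b →
        (∑ j ∈ J.filter (fun j => e j < e a), h j) + h a ≤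
          ∑ j ∈ J.filter (fun j => e j < e b), h j := by
      intro a b ha _ hab
      have hnotmem : a ∉ J.filter (fun j => e j < e a) := by simp
      have hsub : insert a (J.filter (fun j => e j < e a)) ⊆
          J.filter (fun j => e j < e b) := by
        intro x hx
        rcases Finset.mem_insert.mp hx with rfl | hx
        · exact Finset.mem_filter.mpr ⟨ha, hab⟩
        · rcases Finset.mem_filter.mp hx with ⟨h1, h2⟩
          exact Finset.mem_filter.mpr ⟨h1, h2.trans hab⟩
      calc (∑ j ∈ J.filter (fun j => e j < e a), h j) + h a
          = ∑ j ∈ insert a (J.filter (fun j => e j < e a)), h j := by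
            rw [Finset.sum_insert hnotmem]; ring
        _ ≤ _ := Finset.sum_le_sum_of_subset hsub
    rcases lt_or_gt_of_ne (fun hc : e i = e j => hij (e.injective hc)) with hlt | hlt
    · exact Or.inl (key i j hi hj hlt)
    · exact Or.inr (key j i hj hi hlt)

lemma feasible_stack [Fintype ι] (J : Finset ι) (w h : ι → ℕ) (W : ℕ)
    (hw : ∀ i ∈ J, w i ≤ W) : feasibleIn J w h W (∑ i ∈ J, h i) := by
  obtain ⟨y, hy1, hy2⟩ := pile_exists J h
  refine ⟨fun _ => 0, y, fun i hi => ⟨by simpa using hw i hi, hy1 i hi⟩, ?_⟩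
  intro i hi j hj hij
  rcases hy2 i hi j hj hij with hc | hc
  · exact Or.inr (Or.inr (Or.inl hc))
  · exact Or.inr (Or.inr (Or.inr hc))

/-- Compression: remove the (y-)strips occupied by `B` to get a packing of `R`
of height `k - ∑ i in B, h i`. -/
lemma compress (B R : Finset ι) (w h : ι → ℕ) (W k : ℕ) (x y : ι → ℕ)
    (hxW : ∀ i ∈ R, x i + w i ≤ W)
    (hyk : ∀ i, i ∈ B ∪ R → y i + h i ≤ k)
    (hBB : ∀ i ∈ B, ∀ j ∈ B, i ≠ j → y i + h i ≤ y j ∨ y j + h j ≤ y i)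
    (hBR : ∀ i ∈ B, ∀ j ∈ R, y i + h i ≤ y j ∨ y j + h j ≤ y i)
    (hRR : ∀ i ∈ R, ∀ j ∈ R, i ≠ j →
      x i + w i ≤ x j ∨ x j + w j ≤ x i ∨ y i + h i ≤ y j ∨ y j + h j ≤ y i) :
    (∑ i ∈ B, h i ≤ k) ∧ feasibleIn R w h W (k - ∑ i ∈ B, h i) := by
  classical
  set U : Finset ℕ := B.biUnion (fun i => Finset.Ico (y i) (y i + h i)) with hU
  have hUcard : U.card = ∑ i ∈ B, h i := by
    rw [hU, Finset.card_biUnion]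
    · simp
    · intro i hi j hj hij
      have hsep := hBB i hi j hj hij
      rw [Function.onFun, Finset.disjoint_left]
      intro s hs1 hs2
      rw [Finset.mem_Ico] at hs1 hs2
      omega
  have hUsub : U ⊆ Finset.range k := by
    intro s hs
    rw [hU, Finset.mem_biUnion] at hs
    obtain ⟨i, hi, hs⟩ := hs
    rw [Finset.mem_Ico] at hs
    have := hyk i (Finset.mem_union_left _ hi)
    rw [Finset.mem_range]; omega
  have hHBk : ∑ i ∈ B, h i ≤ k := by
    rw [← hUcard]
    calc U.card ≤ (Finset.range k).card := Finset.card_le_card hUsub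
      _ = k := Finset.card_range k
  set f : ℕ → ℕ := fun t => (Finset.range t \ U).card with hf
  have fmono : ∀ {t t'}, t ≤ t' → f t ≤ f t' := by
    intro t t' htt
    exact Finset.card_le_card
      (Finset.sdiff_subset_sdiff (Finset.range_subset_range.mpr htt) subset_rfl)
  have fk : f k = k - ∑ i ∈ B, h i := by
    rw [hf]
    simp only
    rw [Finset.card_sdiff_of_subset hUsub, Finset.card_range, hUcard]
  have fstep : ∀ a m, Disjoint (Finset.Ico a (a + m)) U → f (a + m) = f a + m := by
    intro a m hdisj
    have hsplit : Finset.range (a + m) = Finset.range a ∪ Finset.Ico a (a + m) := by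
      rw [Finset.range_eq_Ico, Finset.range_eq_Ico]
      exact (Finset.Ico_union_Ico_eq_Ico (Nat.zero_le a) (Nat.le_add_right a m)).symm
    have hd2 : Disjoint (Finset.range a \ U) (Finset.Ico a (a + m)) := by
      rw [Finset.disjoint_left]
      intro s hs1 hs2
      have h1 := Finset.mem_range.mp (Finset.mem_sdiff.mp hs1).1
      have h2 := (Finset.mem_Ico.mp hs2).1
      omega
    rw [hf]
    simp only
    rw [hsplit, Finset.union_sdiff_distrib,
      Finset.sdiff_eq_self_iff_disjoint.mpr hdisj,
      Finset.card_union_of_disjoint hd2, Nat.card_Ico]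
    omega
  have hdisjR : ∀ l ∈ R, Disjoint (Finset.Ico (y l) (y l + h l)) U := by
    intro l hl
    rw [Finset.disjoint_left]
    intro s hs1 hs2
    rw [hU, Finset.mem_biUnion] at hs2
    obtain ⟨i, hi, hs2⟩ := hs2
    rw [Finset.mem_Ico] at hs1 hs2
    have := hBR i hi l hl
    omega
  refine ⟨hHBk, x, fun j => f (y j), ?_, ?_⟩
  · intro j hj
    refine ⟨hxW j hj, ?_⟩
    show f (y j) + h j ≤ k - ∑ i ∈ B, h i
    have h1 := fstep (y j) (h j) (hdisjR j hj)
    have h2 := fmono (hyk j (Finset.mem_union_right _ hj))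
    omega
  · intro i hi j hj hij
    rcases hRR i hi j hj hij with hc | hc | hc | hc
    · exact Or.inl hc
    · exact Or.inr (Or.inl hc)
    · refine Or.inr (Or.inr (Or.inl ?_))
      show f (y i) + h i ≤ f (y j)
      have h1 := fstep (y i) (h i) (hdisjR i hi)
      have h2 := fmono hc
      omega
    · refine Or.inr (Or.inr (Or.inr ?_))
      show f (y j) + h j ≤ f (y i)
      have h1 := fstep (y j) (h j) (hdisjR j hj)
      have h2 := fmono hc
      omega

end Aux

/-- Martello–Monaci–Vigo reduction: if all items of `S` fit beside the pile of the
widest items `B`, then there is an optimal strip packing with `B` stacked left-aligned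
at the bottom and `S` packed beside it, and the optimum decomposes additively. -/
theorem stmt_12 {ι : Type*} [Fintype ι] [DecidableEq ι] (w h : ι → ℕ) (W w1 : ℕ)
    (hw : ∀ i, 0 < w i ∧ w i ≤ W) (hh : ∀ i, 0 < h i)
    (hw1 : W < 2 * w1) (hmax : ∀ i, w i ≤ w1) (hex : ∃ i, w i = w1)
    (B S : Finset ι)
    (hB : B = univ.filter (fun i => w i = w1))
    (hS : S = univ.filter (fun i => w i ≤ W - w1))
    (HB : ℕ) (hHB : HB = ∑ i ∈ B, h i)
    (hpackS : feasibleIn S w h (W - w1) HB) :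
    (∃ x y : ι → ℕ,
      (∀ i, x i + w i ≤ W ∧ y i + h i ≤ stripOPT univ w h W) ∧
      (∀ i j, i ≠ j →
        x i + w i ≤ x j ∨ x j + w j ≤ x i ∨ y i + h i ≤ y j ∨ y j + h j ≤ y i) ∧
      (∀ i ∈ B, x i = 0 ∧ y i + h i ≤ HB) ∧
      (∀ j ∈ S, w1 ≤ x j ∧ y j + h j ≤ HB)) ∧
    stripOPT univ w h W = HB + stripOPT (univ \ (B ∪ S)) w h W := by
  classical
  obtain ⟨i0, hi0⟩ := hex
  have hw1W : w1 ≤ W := hi0 ▸ (hw i0).2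
  set R : Finset ι := univ \ (B ∪ S) with hR
  have hmemB : ∀ i, i ∈ B ↔ w i = w1 := by intro i; simp [hB]
  have hmemS : ∀ i, i ∈ S ↔ w i ≤ W - w1 := by intro i; simp [hS]
  have hmemR : ∀ i, i ∈ R ↔ (W - w1 < w i ∧ w i ≠ w1) := by
    intro i
    rw [hR]
    simp only [Finset.mem_sdiff, Finset.mem_union, Finset.mem_univ, true_and,
      hmemB, hmemS, not_or]
    omega
  have hBS : ∀ i, i ∈ B → i ∉ S := by
    intro i hiB hiS
    rw [hmemB] at hiB
    rw [hmemS] at hiS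
    omega
  -- the construction
  obtain ⟨yB, hyB1, hyB2⟩ := pile_exists B h
  obtain ⟨xs, ys, hs1, hs2⟩ := hpackS
  have hfeasR : feasibleIn R w h W (stripOPT R w h W) :=
    Nat.sInf_mem (s := {k : ℕ | feasibleIn R w h W k})
      ⟨_, feasible_stack R w h W (fun i _ => (hw i).2)⟩
  obtain ⟨xr, yr, hr1, hr2⟩ := hfeasR
  set OPTR := stripOPT R w h W with hOPTR
  set X : ι → ℕ := fun i => if i ∈ B then 0 else if i ∈ S then xs i + w1 else xr i with hX
  set Y : ι → ℕ := fun i => if i ∈ B then yB i else if i ∈ S then ys i else yr i + HB with hY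
  have hmemR' : ∀ i, i ∉ B → i ∉ S → i ∈ R := by
    intro i h1 h2
    rw [hR]
    simp [h1, h2]
  have hXB : ∀ i ∈ B, X i = 0 := by intro i hi; simp [hX, hi]
  have hYB : ∀ i ∈ B, Y i = yB i := by intro i hi; simp [hY, hi]
  have hXS : ∀ i ∈ S, X i = xs i + w1 := by
    intro i hi
    have hiB : i ∉ B := fun hc => hBS i hc hi
    simp [hX, hi, hiB]
  have hYS : ∀ i ∈ S, Y i = ys i := by
    intro i hi
    have hiB : i ∉ B := fun hc => hBS i hc hi
    simp [hY, hi, hiB]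
  have hXR : ∀ i ∈ R, X i = xr i := by
    intro i hi
    have h1 : i ∉ B := by rw [hR] at hi; simp at hi; exact hi.1
    have h2 : i ∉ S := by rw [hR] at hi; simp at hi; exact hi.2
    simp [hX, h1, h2]
  have hYR : ∀ i ∈ R, Y i = yr i + HB := by
    intro i hi
    have h1 : i ∉ B := by rw [hR] at hi; simp at hi; exact hi.1
    have h2 : i ∉ S := by rw [hR] at hi; simp at hi; exact hi.2
    simp [hY, h1, h2]
  have hYBb : ∀ i ∈ B, Y i + h i ≤ HB := by
    intro i hi
    rw [hYB i hi, hHB]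
    exact hyB1 i hi
  have hYSb : ∀ i ∈ S, Y i + h i ≤ HB := by
    intro i hi
    rw [hYS i hi]
    exact (hs1 i hi).2
  have hXW : ∀ i, X i + w i ≤ W := by
    intro i
    by_cases hiB : i ∈ B
    · rw [hXB i hiB, (hmemB i).mp hiB]
      omega
    · by_cases hiS : i ∈ S
      · rw [hXS i hiS]
        have := (hs1 i hiS).1
        omega
      · rw [hXR i (hmemR' i hiB hiS)]
        exact (hr1 i (hmemR' i hiB hiS)).1
  have hYbound : ∀ i, Y i + h i ≤ HB + OPTR := by
    intro i
    by_cases hiB : i ∈ B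
    · have := hYBb i hiB; omega
    · by_cases hiS : i ∈ S
      · have := hYSb i hiS; omega
      · rw [hYR i (hmemR' i hiB hiS)]
        have := (hr1 i (hmemR' i hiB hiS)).2
        omega
  have hsep : ∀ i j, i ≠ j →
      X i + w i ≤ X j ∨ X j + w j ≤ X i ∨ Y i + h i ≤ Y j ∨ Y j + h j ≤ Y i := by
    intro i j hij
    by_cases hiB : i ∈ B
    · by_cases hjB : j ∈ B
      · rcases hyB2 i hiB j hjB hij with hc | hc
        · exact Or.inr (Or.inr (Or.inl (by rw [hYB i hiB, hYB j hjB]; exact hc)))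
        · exact Or.inr (Or.inr (Or.inr (by rw [hYB i hiB, hYB j hjB]; exact hc)))
      · by_cases hjS : j ∈ S
        · refine Or.inl ?_
          rw [hXB i hiB, hXS j hjS, (hmemB i).mp hiB]
          omega
        · refine Or.inr (Or.inr (Or.inl ?_))
          rw [hYR j (hmemR' j hjB hjS)]
          have := hYBb i hiB
          omega
    · by_cases hjB : j ∈ B
      · by_cases hiS : i ∈ S
        · refine Or.inr (Or.inl ?_)
          rw [hXB j hjB, hXS i hiS, (hmemB j).mp hjB]
          omega
        · refine Or.inr (Or.inr (Or.inr ?_))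
          rw [hYR i (hmemR' i hiB hiS)]
          have := hYBb j hjB
          omega
      · by_cases hiS : i ∈ S
        · by_cases hjS : j ∈ S
          · rw [hXS i hiS, hXS j hjS, hYS i hiS, hYS j hjS]
            rcases hs2 i hiS j hjS hij with hc | hc | hc | hc
            · exact Or.inl (by omega)
            · exact Or.inr (Or.inl (by omega))
            · exact Or.inr (Or.inr (Or.inl hc))
            · exact Or.inr (Or.inr (Or.inr hc))
          · refine Or.inr (Or.inr (Or.inl ?_))
            rw [hYR j (hmemR' j hjB hjS)]
            have := hYSb i hiS
            omega
        · by_cases hjS : j ∈ S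
          · refine Or.inr (Or.inr (Or.inr ?_))
            rw [hYR i (hmemR' i hiB hiS)]
            have := hYSb j hjS
            omega
          · have hiR := hmemR' i hiB hiS
            have hjR := hmemR' j hjB hjS
            rw [hXR i hiR, hXR j hjR, hYR i hiR, hYR j hjR]
            rcases hr2 i hiR j hjR hij with hc | hc | hc | hc
            · exact Or.inl hc
            · exact Or.inr (Or.inl hc)
            · exact Or.inr (Or.inr (Or.inl (by omega)))
            · exact Or.inr (Or.inr (Or.inr (by omega)))
  have hfeasU : feasibleIn univ w h W (HB + OPTR) :=
    ⟨X, Y, fun i _ => ⟨hXW i, hYbound i⟩, fun i _ j _ hij => hsep i j hij⟩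
  have hupper : stripOPT univ w h W ≤ HB + OPTR := Nat.sInf_le hfeasU
  -- lower bound via compression
  have hfeasO : feasibleIn univ w h W (stripOPT univ w h W) :=
    Nat.sInf_mem (s := {k : ℕ | feasibleIn univ w h W k})
      ⟨_, feasible_stack univ w h W (fun i _ => (hw i).2)⟩
  obtain ⟨xo, yo, ho1, ho2⟩ := hfeasO
  have hBB' : ∀ i ∈ B, ∀ j ∈ B, i ≠ j → yo i + h i ≤ yo j ∨ yo j + h j ≤ yo i := by
    intro i hi j hj hij
    have hwi := (hmemB i).mp hi
    have hwj := (hmemB j).mp hj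
    have h1 := (ho1 i (mem_univ i)).1
    have h2 := (ho1 j (mem_univ j)).1
    rcases ho2 i (mem_univ i) j (mem_univ j) hij with hc | hc | hc | hc
    · exfalso; omega
    · exfalso; omega
    · exact Or.inl hc
    · exact Or.inr hc
  have hBR' : ∀ i ∈ B, ∀ j ∈ R, yo i + h i ≤ yo j ∨ yo j + h j ≤ yo i := by
    intro i hi j hj
    have hwi := (hmemB i).mp hi
    have hwj := (hmemR j).mp hj
    have hij : i ≠ j := by rintro rfl; exact hwj.2 hwi
    have h1 := (ho1 i (mem_univ i)).1
    have h2 := (ho1 j (mem_univ j)).1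
    rcases ho2 i (mem_univ i) j (mem_univ j) hij with hc | hc | hc | hc
    · exfalso; omega
    · exfalso; omega
    · exact Or.inl hc
    · exact Or.inr hc
  obtain ⟨hHBle, hcomp⟩ := compress B R w h W (stripOPT univ w h W) xo yo
    (fun i _ => (ho1 i (mem_univ i)).1)
    (fun i _ => (ho1 i (mem_univ i)).2)
    hBB' hBR'
    (fun i _ j _ hij => ho2 i (mem_univ i) j (mem_univ j) hij)
  rw [← hHB] at hHBle hcomp
  have hlow : HB + OPTR ≤ stripOPT univ w h W := by
    have hle : stripOPT R w h W ≤ stripOPT univ w h W - HB := Nat.sInf_le hcomp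
    rw [← hOPTR] at hle
    omega
  have heq : stripOPT univ w h W = HB + OPTR := le_antisymm hupper hlow
  refine ⟨⟨X, Y, ?_, hsep, ?_, ?_⟩, heq⟩
  · intro i
    exact ⟨hXW i, by rw [heq]; exact hYbound i⟩
  · intro i hi
    exact ⟨hXB i hi, hYBb i hi⟩
  · intro j hj
    refine ⟨?_, hYSb j hj⟩
    rw [hXS j hj]
    omega
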